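/- There exist universal constants A, C > 0 such that the following holds. Let X be a finite, connected, undirected d-regular graph with doubling constant c_X ≥ 2. Then for every integer k with 3 ≤ k ≤ |V|, the k-th eigenvalue of the discrete Laplacian on X satisfies λ_k ≤ C · k^{A·c_X} / diam(X)². -/

import Mathlib

open Finset

/-- The closed ball of radius `R` (a real number) about `x` in the shortest-path metric
of the graph `G`. -/
noncomputable def gball {V : Type} [Fintype V] (G : SimpleGraph V) (x : V) (R : ℝ) : Finset V :=
  @Finset.filter _ (fun y => (G.dist x y : ℝ) ≤ R) (Classical.decPred _) Finset.univ

/-- The set of neighbors of `x` in `G`. -/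
noncomputable def nbrs {V : Type} [Fintype V] (G : SimpleGraph V) (x : V) : Finset V :=
  @Finset.filter _ (fun y => G.Adj x y) (Classical.decPred _) Finset.univ

/-- The diameter of the graph `G` in the shortest-path metric. -/
noncomputable def gdiam {V : Type} [Fintype V] (G : SimpleGraph V) : ℕ :=
  Finset.univ.sup fun p : V × V => G.dist p.1 p.2

set_option linter.unusedSectionVars false

lemma swap_nbrs {V : Type} [Fintype V] (G : SimpleGraph V) (F : V → V → ℝ) :
    ∑ x, ∑ y ∈ nbrs G x, F x y = ∑ x, ∑ y ∈ nbrs G x, F y x := by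
  classical
  have h1 : ∀ (F : V → V → ℝ), ∑ x, ∑ y ∈ nbrs G x, F x y
      = ∑ x, ∑ y, if G.Adj x y then F x y else 0 := by
    intro F
    refine Finset.sum_congr rfl fun x _ => ?_
    rw [nbrs]
    rw [Finset.sum_filter]
  rw [h1, h1, Finset.sum_comm]
  refine Finset.sum_congr rfl fun x _ => Finset.sum_congr rfl fun y _ => ?_
  simp only [G.adj_comm]


section
variable {V : Type} [Fintype V] (G : SimpleGraph V) (d : ℕ)
  (lap : Module.End ℝ (V → ℝ))

lemma form_identity (hd : 1 ≤ d) (hreg : ∀ x : V, (nbrs G x).card = d)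
    (hlap : ∀ (f : V → ℝ) (x : V), lap f x = f x - (1 / (d : ℝ)) * ∑ y ∈ nbrs G x, f y)
    (f g : V → ℝ) :
    ∑ x, f x * lap g x
      = (1 / (2 * d)) * ∑ x, ∑ y ∈ nbrs G x, (f x - f y) * (g x - g y) := by
  have hd0 : (d : ℝ) ≠ 0 := by positivity
  have hexp : ∑ x, ∑ y ∈ nbrs G x, (f x - f y) * (g x - g y)
      = 2 * (d : ℝ) * (∑ x, f x * g x) - 2 * ∑ x, ∑ y ∈ nbrs G x, f x * g y := by
    have e1 : ∀ x : V, ∑ y ∈ nbrs G x, (f x - f y) * (g x - g y)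
        = (d : ℝ) * (f x * g x) - ∑ y ∈ nbrs G x, f x * g y
          - ∑ y ∈ nbrs G x, f y * g x + ∑ y ∈ nbrs G x, f y * g y := by
      intro x
      have : ∑ y ∈ nbrs G x, (f x - f y) * (g x - g y)
          = ∑ y ∈ nbrs G x, (f x * g x - f x * g y - f y * g x + f y * g y) := by
        refine Finset.sum_congr rfl fun y _ => by ring
      rw [this, Finset.sum_add_distrib, Finset.sum_sub_distrib, Finset.sum_sub_distrib,
        Finset.sum_const, hreg x, nsmul_eq_mul]
    rw [Finset.sum_congr rfl (fun x _ => e1 x)]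
    have e2 : ∑ x, ∑ y ∈ nbrs G x, f y * g y = (d : ℝ) * ∑ x, f x * g x := by
      rw [swap_nbrs G (fun x y => f y * g y)]
      simp only [Finset.sum_const, hreg, nsmul_eq_mul]
      rw [Finset.mul_sum]
    have e3 : ∑ x, ∑ y ∈ nbrs G x, f y * g x = ∑ x, ∑ y ∈ nbrs G x, f x * g y := by
      rw [swap_nbrs G (fun x y => f y * g x)]
    rw [Finset.sum_add_distrib, Finset.sum_sub_distrib, Finset.sum_sub_distrib, e2, e3]
    simp only [Finset.mul_sum, Finset.sum_mul]
    ring_nf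
    congr 1
    · rw [Finset.sum_mul]
    · rw [Finset.sum_mul]
      refine Finset.sum_congr rfl fun x _ => ?_
      rw [Finset.sum_mul]
  have hl : ∑ x, f x * lap g x
      = (∑ x, f x * g x) - (1 / (d : ℝ)) * ∑ x, ∑ y ∈ nbrs G x, f x * g y := by
    have : ∀ x, f x * lap g x
        = f x * g x - (1 / (d : ℝ)) * ∑ y ∈ nbrs G x, f x * g y := by
      intro x
      rw [hlap g x, Finset.mul_sum, Finset.mul_sum]
      ring_nf
      rw [Finset.mul_sum]
      refine congrArg _ (Finset.sum_congr rfl fun y _ => by ring)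
    rw [Finset.sum_congr rfl (fun x _ => this x), Finset.sum_sub_distrib, ← Finset.mul_sum]
  rw [hl, hexp]
  field_simp
end


section
variable {V : Type} [Fintype V] (G : SimpleGraph V) (d : ℕ)
  (lap : Module.End ℝ (V → ℝ))

lemma sumsq_pos {f : V → ℝ} (hf : f ≠ 0) : 0 < ∑ x, f x * f x := by
  obtain ⟨x, hx⟩ := Function.ne_iff.mp hf
  exact Finset.sum_pos' (fun y _ => mul_self_nonneg _)
    ⟨x, Finset.mem_univ x, mul_self_pos.mpr hx⟩

lemma eig_le_two
    (hform : ∀ f g : V → ℝ, ∑ x, f x * lap g x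
      = (1 / (2 * (d:ℝ))) * ∑ x, ∑ y ∈ nbrs G x, (f x - f y) * (g x - g y))
    (hswap : ∀ F : V → V → ℝ, ∑ x, ∑ y ∈ nbrs G x, F x y = ∑ x, ∑ y ∈ nbrs G x, F y x)
    (hd : 1 ≤ d) (hreg : ∀ x : V, (nbrs G x).card = d)
    {μ : ℝ} {f : V → ℝ} (hf : f ≠ 0) (heig : lap f = μ • f) : μ ≤ 2 := by
  have hd0 : (0:ℝ) < d := by exact_mod_cast hd
  have hN : 0 < ∑ x, f x * f x := sumsq_pos hf
  have h1 : ∑ x, f x * lap f x = μ * ∑ x, f x * f x := by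
    rw [heig, Finset.mul_sum]
    exact Finset.sum_congr rfl fun x _ => by simp [smul_eq_mul]; ring
  have hE : ∑ x, ∑ y ∈ nbrs G x, (f x - f y) * (f x - f y)
      ≤ 4 * d * ∑ x, f x * f x := by
    have step1 : ∑ x, ∑ y ∈ nbrs G x, (f x - f y) * (f x - f y)
        ≤ ∑ x, ∑ y ∈ nbrs G x, (2 * (f x * f x) + 2 * (f y * f y)) := by
      refine Finset.sum_le_sum fun x _ => Finset.sum_le_sum fun y _ => ?_
      nlinarith [sq_nonneg (f x + f y)]
    have step2 : ∑ x, ∑ y ∈ nbrs G x, (2 * (f x * f x) + 2 * (f y * f y))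
        = 4 * d * ∑ x, f x * f x := by
      have hA : ∀ (F : V → ℝ), ∑ x, ∑ y ∈ nbrs G x, F x = (d:ℝ) * ∑ x, F x := by
        intro F
        simp only [Finset.sum_const, hreg, nsmul_eq_mul]
        rw [Finset.mul_sum]
      have hB : ∑ x, ∑ y ∈ nbrs G x, 2 * (f y * f y) = (d:ℝ) * ∑ x, 2 * (f x * f x) := by
        rw [hswap (fun x y => 2 * (f y * f y))]
        exact hA _
      simp only [Finset.sum_add_distrib]
      rw [hB, hA (fun x => 2 * (f x * f x)), Finset.mul_sum, Finset.mul_sum]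
      rw [← Finset.sum_add_distrib]
      exact Finset.sum_congr rfl fun x _ => by ring
    linarith
  have h2 : μ * ∑ x, f x * f x ≤ 2 * ∑ x, f x * f x := by
    rw [← h1, hform f f]
    have : (1 / (2 * (d:ℝ))) * ∑ x, ∑ y ∈ nbrs G x, (f x - f y) * (f x - f y)
        ≤ (1 / (2 * (d:ℝ))) * (4 * d * ∑ x, f x * f x) := by
      apply mul_le_mul_of_nonneg_left hE
      positivity
    calc (1 / (2 * (d:ℝ))) * ∑ x, ∑ y ∈ nbrs G x, (f x - f y) * (f x - f y)
        ≤ (1 / (2 * (d:ℝ))) * (4 * d * ∑ x, f x * f x) := this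
      _ = 2 * ∑ x, f x * f x := by field_simp; ring
  exact le_of_mul_le_mul_right (by linarith [h2]) hN
end


lemma decomp_sup {M : Type*} [AddCommGroup M] [Module ℝ M] (p : ℝ → Submodule ℝ M)
    (s : Finset ℝ) : ∀ x ∈ s.sup p, ∃ F : ℝ → M, (∀ μ ∈ s, F μ ∈ p μ) ∧ ∑ μ ∈ s, F μ = x := by
  classical
  induction s using Finset.induction_on with
  | empty =>
    intro x hx
    simp only [Finset.sup_empty, Submodule.mem_bot] at hx
    exact ⟨0, by simp, by simp [hx]⟩
  | @insert a s' ha ih =>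
    intro x hx
    rw [Finset.sup_insert] at hx
    obtain ⟨y, hy, z, hz, rfl⟩ := Submodule.mem_sup.mp hx
    obtain ⟨F, hF, hFs⟩ := ih z hz
    refine ⟨fun μ => if μ = a then y else F μ, ?_, ?_⟩
    · intro μ hμ
      rcases Finset.mem_insert.mp hμ with h | h
      · simp [h, hy]
      · have : μ ≠ a := fun he => ha (he ▸ h)
        simp [this, hF μ h]
    · rw [Finset.sum_insert ha]
      simp only [if_pos rfl]
      congr 1
      rw [← hFs]
      refine Finset.sum_congr rfl fun μ hμ => ?_
      have : μ ≠ a := fun he => ha (he ▸ hμ)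
      simp [this]

lemma finrank_sup_ge {M : Type*} [AddCommGroup M] [Module ℝ M] [FiniteDimensional ℝ M]
    (lap : Module.End ℝ M) (s : Finset ℝ) :
    ∑ μ ∈ s, Module.finrank ℝ (Module.End.eigenspace lap μ)
      ≤ Module.finrank ℝ (s.sup fun μ => Module.End.eigenspace lap μ : Submodule ℝ M) := by
  classical
  induction s using Finset.induction_on with
  | empty => simp
  | @insert a s' ha ih =>
    rw [Finset.sum_insert ha, Finset.sup_insert]
    have hdisj : Disjoint (Module.End.eigenspace lap a)
        (s'.sup fun μ => Module.End.eigenspace lap μ) := by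
      refine (lap.eigenspaces_iSupIndep a).mono_right ?_
      refine Finset.sup_le fun b hb => ?_
      have hba : b ≠ a := fun h => ha (h ▸ hb)
      exact le_iSup₂ (f := fun (j : ℝ) (_ : j ≠ a) => Module.End.eigenspace lap j) b hba
    have h := Submodule.finrank_sup_add_finrank_inf_eq (Module.End.eigenspace lap a)
      (s'.sup fun μ => Module.End.eigenspace lap μ)
    rw [hdisj.eq_bot] at h
    simp only [finrank_bot, add_zero] at h
    have hle : Module.finrank ℝ (s'.sup fun μ => Module.End.eigenspace lap μ : Submodule ℝ M)
        ≤ Module.finrank ℝ ((Module.End.eigenspace lap a) ⊔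
            (s'.sup fun μ => Module.End.eigenspace lap μ) : Submodule ℝ M) := by omega
    omega

lemma expand_double {V : Type} [Fintype V] {ι : Type*} (s : Finset ι)
    (F G' : ι → V → ℝ) (c e : ι → ℝ)
    (horth : ∀ i ∈ s, ∀ j ∈ s, i ≠ j → ∑ x, F i x * G' j x = 0) :
    ∑ x, (∑ i ∈ s, c i * F i x) * (∑ j ∈ s, e j * G' j x)
      = ∑ i ∈ s, (c i * e i) * ∑ x, F i x * G' i x := by
  classical
  have h1 : ∑ x, (∑ i ∈ s, c i * F i x) * (∑ j ∈ s, e j * G' j x)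
      = ∑ i ∈ s, ∑ j ∈ s, ∑ x, (c i * F i x) * (e j * G' j x) := by
    rw [show (∑ x, (∑ i ∈ s, c i * F i x) * (∑ j ∈ s, e j * G' j x))
        = ∑ x, ∑ i ∈ s, ∑ j ∈ s, (c i * F i x) * (e j * G' j x) from
      Finset.sum_congr rfl fun x _ => Finset.sum_mul_sum _ _ _ _]
    rw [Finset.sum_comm]
    exact Finset.sum_congr rfl fun i _ => Finset.sum_comm
  rw [h1]
  refine Finset.sum_congr rfl fun i hi => ?_
  rw [Finset.sum_eq_single i]
  · rw [Finset.mul_sum]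
    exact Finset.sum_congr rfl fun x _ => by ring
  · intro j hj hji
    have : ∑ x, F i x * G' j x = 0 := horth i hi j hj (fun h => hji h.symm)
    have h2 : ∑ x, (c i * F i x) * (e j * G' j x)
        = (c i * e j) * ∑ x, F i x * G' j x := by
      rw [Finset.mul_sum]; exact Finset.sum_congr rfl fun x _ => by ring
    rw [h2, this, mul_zero]
  · intro h; exact absurd hi h


lemma spectral {V : Type} [Fintype V] (lap : Module.End ℝ (V → ℝ))
    (hsym : ∀ f g : V → ℝ, ∑ x, f x * lap g x = ∑ x, lap f x * g x)
    (lam : Fin (Fintype.card V) → ℝ) (hmono : Monotone lam)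
    (hmult : ∀ μ : ℝ, Nat.card {i : Fin (Fintype.card V) // lam i = μ}
        = Module.finrank ℝ (Module.End.eigenspace lap μ))
    (k : ℕ) (hk1 : 1 ≤ k) (hkn : k ≤ Fintype.card V)
    (f : Fin k → (V → ℝ)) (β : ℝ)
    (horthN : ∀ i j, i ≠ j → ∑ x, f i x * f j x = 0)
    (horthQ : ∀ i j, i ≠ j → ∑ x, f i x * lap (f j) x = 0)
    (hind : LinearIndependent ℝ f)
    (hq : ∀ i, ∑ x, f i x * lap (f i) x ≤ β * ∑ x, f i x * f i x) :
    lam ⟨k - 1, by omega⟩ ≤ β := by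
  classical
  set_option synthInstance.maxHeartbeats 1000000 in
  set_option maxHeartbeats 2000000 in
  by_contra hcon
  push_neg at hcon
  have hn : True := trivial
  -- counting indices with lam i > β
  have hcount : (Fintype.card V) - (k - 1) ≤ (univ.filter fun i : Fin (Fintype.card V) => β < lam i).card := by
    have hsub : (univ.filter fun i : Fin (Fintype.card V) => k - 1 ≤ (i : ℕ))
        ⊆ univ.filter fun i : Fin (Fintype.card V) => β < lam i := by
      intro i hi
      simp only [Finset.mem_filter, Finset.mem_univ, true_and] at hi ⊢
      exact lt_of_lt_of_le hcon (hmono (Fin.le_def.mpr hi))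
    have hlt : (univ.filter fun i : Fin (Fintype.card V) => (i : ℕ) < k - 1).card ≤ k - 1 := by
      have := Finset.card_le_card_of_injOn
        (f := fun i : Fin (Fintype.card V) => (i : ℕ)) (s := univ.filter fun i : Fin (Fintype.card V) => (i : ℕ) < k - 1)
        (t := Finset.range (k - 1))
        (by intro i hi; simpa using hi)
        (by intro a _ b _ h; exact Fin.val_injective h)
      simpa using this
    have hpart := Finset.card_filter_add_card_filter_not
      (s := (univ : Finset (Fin (Fintype.card V)))) (p := fun i : Fin (Fintype.card V) => (i : ℕ) < k - 1)
    have heq : (univ.filter fun i : Fin (Fintype.card V) => ¬ ((i : ℕ) < k - 1))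
        = univ.filter fun i : Fin (Fintype.card V) => k - 1 ≤ (i : ℕ) := by
      refine Finset.filter_congr fun i _ => ?_
      constructor
      · intro h; omega
      · intro h; omega
    have hcard : (univ : Finset (Fin (Fintype.card V))).card = (Fintype.card V) := by simp
    calc (Fintype.card V) - (k - 1) ≤ (univ.filter fun i : Fin (Fintype.card V) => k - 1 ≤ (i : ℕ)).card := by
          rw [← heq]; omega
      _ ≤ _ := Finset.card_le_card hsub
  set S : Finset ℝ := (univ.filter fun i : Fin (Fintype.card V) => β < lam i).image lam with hS
  have hmu : ∀ μ ∈ S, β < μ := by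
    intro μ hμ
    rw [hS] at hμ
    obtain ⟨i, hi, rfl⟩ := Finset.mem_image.mp hμ
    exact (Finset.mem_filter.mp hi).2
  set P : Submodule ℝ (V → ℝ) := S.sup fun μ => Module.End.eigenspace lap μ with hP
  have hfinP : (Fintype.card V) - (k - 1) ≤ Module.finrank ℝ P := by
    have hcs : (univ.filter fun i : Fin (Fintype.card V) => β < lam i).card
        = ∑ μ ∈ S, (univ.filter fun i : Fin (Fintype.card V) => lam i = μ).card := by
      have := Finset.card_eq_sum_card_fiberwise
        (s := univ.filter fun i : Fin (Fintype.card V) => β < lam i) (t := S) (f := lam)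
        (fun i hi => Finset.mem_image_of_mem lam hi)
      rw [this]
      refine Finset.sum_congr rfl fun μ hμ => ?_
      congr 1
      rw [Finset.filter_filter]
      refine Finset.filter_congr fun i _ => ?_
      constructor
      · rintro ⟨_, h⟩; exact h
      · rintro h; exact ⟨h ▸ hmu μ hμ, h⟩
    have hfib : ∀ μ : ℝ, (univ.filter fun i : Fin (Fintype.card V) => lam i = μ).card
        = Module.finrank ℝ (Module.End.eigenspace lap μ) := by
      intro μ
      rw [← hmult μ, Nat.card_eq_fintype_card, Fintype.card_subtype]
    calc (Fintype.card V) - (k - 1) ≤ (univ.filter fun i : Fin (Fintype.card V) => β < lam i).card := hcount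
      _ = ∑ μ ∈ S, Module.finrank ℝ (Module.End.eigenspace lap μ) := by
          rw [hcs]; exact Finset.sum_congr rfl fun μ _ => hfib μ
      _ ≤ Module.finrank ℝ P := finrank_sup_ge lap S
  set W : Submodule ℝ (V → ℝ) := Submodule.span ℝ (Set.range f) with hW
  have hfinW : Module.finrank ℝ W = k := by
    rw [hW, finrank_span_eq_card hind, Fintype.card_fin]
  have htot : Module.finrank ℝ (V → ℝ) = (Fintype.card V) := by
    rw [Module.finrank_fintype_fun_eq_card]
  have hex : ∃ g : V → ℝ, g ≠ 0 ∧ g ∈ W ⊓ P := by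
    have h1 := Submodule.finrank_sup_add_finrank_inf_eq W P
    have h2 : Module.finrank ℝ (W ⊔ P : Submodule ℝ (V → ℝ)) ≤ (Fintype.card V) :=
      htot ▸ Submodule.finrank_le _
    have h3 : 0 < Module.finrank ℝ (W ⊓ P : Submodule ℝ (V → ℝ)) := by omega
    have h4 : (W ⊓ P : Submodule ℝ (V → ℝ)) ≠ ⊥ := by
      intro hbot
      rw [hbot, finrank_bot] at h3
      omega
    obtain ⟨g, hg, hg0⟩ := Submodule.ne_bot_iff _ |>.mp h4
    exact ⟨g, hg0, hg⟩
  obtain ⟨g, hg0, hgWP⟩ := hex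
  have hgW : g ∈ W := hgWP.1
  have hgP : g ∈ P := hgWP.2
  -- upper bound from W
  have hupper : ∑ x, g x * lap g x ≤ β * ∑ x, g x * g x := by
    obtain ⟨a, ha⟩ := (Submodule.mem_span_range_iff_exists_fun ℝ).mp hgW
    have hgx : ∀ x, g x = ∑ i, a i * f i x := by
      intro x
      rw [← ha]
      simp [Finset.sum_apply]
    have hlgx : ∀ x, lap g x = ∑ i, a i * lap (f i) x := by
      intro x
      rw [← ha]
      rw [map_sum]
      simp [Finset.sum_apply]
    have hQ : ∑ x, g x * lap g x = ∑ i, (a i * a i) * ∑ x, f i x * lap (f i) x := by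
      calc ∑ x, g x * lap g x
          = ∑ x, (∑ i, a i * f i x) * (∑ j, a j * lap (f j) x) := by
            refine Finset.sum_congr rfl fun x _ => ?_
            rw [hgx x, hlgx x]
        _ = _ := expand_double univ f (fun i => lap (f i)) a a
            (fun i _ j _ hij => horthQ i j hij)
    have hN : ∑ x, g x * g x = ∑ i, (a i * a i) * ∑ x, f i x * f i x := by
      calc ∑ x, g x * g x
          = ∑ x, (∑ i, a i * f i x) * (∑ j, a j * f j x) := by
            refine Finset.sum_congr rfl fun x _ => ?_
            rw [hgx x]
        _ = _ := expand_double univ f f a a (fun i _ j _ hij => horthN i j hij)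
    rw [hQ, hN, Finset.mul_sum]
    refine Finset.sum_le_sum fun i _ => ?_
    have := mul_le_mul_of_nonneg_left (hq i) (mul_self_nonneg (a i))
    calc (a i * a i) * ∑ x, f i x * lap (f i) x
        ≤ (a i * a i) * (β * ∑ x, f i x * f i x) := this
      _ = β * ((a i * a i) * ∑ x, f i x * f i x) := by ring
  -- lower bound (strict) from P
  have hlower : β * ∑ x, g x * g x < ∑ x, g x * lap g x := by
    obtain ⟨F, hFmem, hFsum⟩ := decomp_sup (fun μ => Module.End.eigenspace lap μ) S g hgP
    have heigF : ∀ μ ∈ S, lap (F μ) = μ • F μ := by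
      intro μ hμ
      exact Module.End.mem_eigenspace_iff.mp (hFmem μ hμ)
    have hgx : ∀ x, g x = ∑ μ ∈ S, (1:ℝ) * F μ x := by
      intro x
      rw [← hFsum]
      simp [Finset.sum_apply]
    have hlgx : ∀ x, lap g x = ∑ μ ∈ S, μ * F μ x := by
      intro x
      rw [← hFsum, map_sum]
      rw [Finset.sum_apply]
      refine Finset.sum_congr rfl fun μ hμ => ?_
      rw [heigF μ hμ]
      simp [smul_eq_mul]
    have horthF : ∀ μ ∈ S, ∀ ν ∈ S, μ ≠ ν → ∑ x, F μ x * F ν x = 0 := by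
      intro μ hμ ν hν hμν
      have h1 : ∑ x, F μ x * lap (F ν) x = ∑ x, lap (F μ) x * F ν x := hsym _ _
      have h2 : ∑ x, F μ x * lap (F ν) x = ν * ∑ x, F μ x * F ν x := by
        rw [Finset.mul_sum]
        refine Finset.sum_congr rfl fun x _ => ?_
        rw [heigF ν hν]
        simp [smul_eq_mul]; ring
      have h3 : ∑ x, lap (F μ) x * F ν x = μ * ∑ x, F μ x * F ν x := by
        rw [Finset.mul_sum]
        refine Finset.sum_congr rfl fun x _ => ?_
        rw [heigF μ hμ]
        simp [smul_eq_mul]; ring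
      have h4 : (μ - ν) * ∑ x, F μ x * F ν x = 0 := by
        rw [sub_mul]; rw [h2] at h1; rw [h3] at h1; linarith
      rcases mul_eq_zero.mp h4 with h | h
      · exact absurd (sub_eq_zero.mp h) hμν
      · exact h
    have hN : ∑ x, g x * g x = ∑ μ ∈ S, ∑ x, F μ x * F μ x := by
      calc ∑ x, g x * g x
          = ∑ x, (∑ μ ∈ S, (1:ℝ) * F μ x) * (∑ ν ∈ S, (1:ℝ) * F ν x) := by
            refine Finset.sum_congr rfl fun x _ => ?_; rw [hgx x]
        _ = ∑ μ ∈ S, ((1:ℝ) * 1) * ∑ x, F μ x * F μ x :=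
            expand_double S F F (fun _ => 1) (fun _ => 1) horthF
        _ = _ := by refine Finset.sum_congr rfl fun μ _ => by ring
    have hQ : ∑ x, g x * lap g x = ∑ μ ∈ S, μ * ∑ x, F μ x * F μ x := by
      calc ∑ x, g x * lap g x
          = ∑ x, (∑ μ ∈ S, (1:ℝ) * F μ x) * (∑ ν ∈ S, ν * F ν x) := by
            refine Finset.sum_congr rfl fun x _ => ?_; rw [hgx x, hlgx x]
        _ = ∑ μ ∈ S, ((1:ℝ) * μ) * ∑ x, F μ x * F μ x :=
            expand_double S F F (fun _ => 1) (fun μ => μ) horthF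
        _ = _ := by refine Finset.sum_congr rfl fun μ _ => by ring
    have hex0 : ∃ μ ∈ S, F μ ≠ 0 := by
      by_contra hall
      push_neg at hall
      apply hg0
      rw [← hFsum]
      exact Finset.sum_eq_zero hall
    obtain ⟨μ0, hμ0S, hμ0⟩ := hex0
    rw [hN, hQ, Finset.mul_sum]
    refine Finset.sum_lt_sum (fun μ hμ => ?_) ⟨μ0, hμ0S, ?_⟩
    · have h1 : 0 ≤ ∑ x, F μ x * F μ x := Finset.sum_nonneg fun x _ => mul_self_nonneg _
      exact mul_le_mul_of_nonneg_right (hmu μ hμ).le h1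
    · have h2 : 0 < ∑ x, F μ0 x * F μ0 x := sumsq_pos hμ0
      exact (mul_lt_mul_of_pos_right (hmu μ0 hμ0S) h2)
  linarith


variable {V : Type} [Fintype V] {G : SimpleGraph V}

lemma mem_gball {x y : V} {R : ℝ} : y ∈ gball G x R ↔ (G.dist x y : ℝ) ≤ R := by
  rw [gball, Finset.mem_filter]
  simp

lemma dist_le_gdiam (u v : V) : G.dist u v ≤ gdiam G :=
  Finset.le_sup (f := fun p : V × V => G.dist p.1 p.2) (Finset.mem_univ (u, v))

lemma exists_gdiam [Nonempty V] : ∃ u v : V, G.dist u v = gdiam G := by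
  obtain ⟨p, _, hp⟩ := Finset.exists_mem_eq_sup (univ : Finset (V × V)) Finset.univ_nonempty
    (fun p : V × V => G.dist p.1 p.2)
  exact ⟨p.1, p.2, hp.symm⟩

lemma gexists_between (hconn : G.Connected) :
    ∀ (a : ℕ) (u v : V) (b : ℕ), G.dist u v = a + b →
      ∃ w, G.dist u w = a ∧ G.dist w v = b := by
  intro a
  induction a with
  | zero =>
    intro u v b h
    exact ⟨u, SimpleGraph.dist_self, by simpa using h⟩
  | succ a ih =>
    intro u v b h
    obtain ⟨p, hp⟩ := hconn.exists_walk_length_eq_dist u v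
    cases p with
    | nil =>
      rw [SimpleGraph.Walk.length_nil] at hp
      omega
    | @cons _ y _ hadj q =>
      rw [SimpleGraph.Walk.length_cons] at hp
      have hql : q.length = a + b := by omega
      have h1 : G.dist y v ≤ a + b := hql ▸ SimpleGraph.dist_le q
      have h2 : G.dist u v ≤ 1 + G.dist y v := by
        obtain ⟨q', hq'⟩ := hconn.exists_walk_length_eq_dist y v
        have := SimpleGraph.dist_le (SimpleGraph.Walk.cons hadj q')
        rw [SimpleGraph.Walk.length_cons, hq'] at this
        omega
      have h3 : G.dist y v = a + b := by omega
      obtain ⟨w, hw1, hw2⟩ := ih y v b h3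
      have huy : G.dist u y ≤ 1 := by
        have := SimpleGraph.dist_le (SimpleGraph.Walk.cons hadj SimpleGraph.Walk.nil)
        simpa using this
      have h4 : G.dist u w ≤ a + 1 := by
        have := hconn.dist_triangle (u := u) (v := y) (w := w)
        omega
      have h5 : a + 1 + b ≤ G.dist u w + b := by
        have := hconn.dist_triangle (u := u) (v := w) (w := v)
        omega
      exact ⟨w, by omega, hw2⟩

noncomputable def tent (G : SimpleGraph V) (x0 : V) (r : ℕ) (z : V) : ℝ :=
  max 0 ((r : ℝ) + 1 - (G.dist x0 z : ℝ))

lemma tent_nonneg {x0 : V} {r : ℕ} {z : V} : 0 ≤ tent G x0 r z := le_max_left _ _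

lemma tent_zero {x0 : V} {r : ℕ} {z : V} (h : (r : ℝ) < (G.dist x0 z : ℝ)) :
    tent G x0 r z = 0 := by
  have hn : G.dist x0 z ≠ 0 → r + 1 ≤ G.dist x0 z := by
    intro _
    by_contra hc
    push_neg at hc
    have : (G.dist x0 z : ℝ) ≤ (r : ℝ) := by exact_mod_cast Nat.lt_succ_iff.mp hc
    linarith
  have hrd : r + 1 ≤ G.dist x0 z := by
    rcases Nat.eq_zero_or_pos (G.dist x0 z) with h0 | h0
    · exfalso
      rw [h0] at h
      simp at h
      have h2 : (0:ℝ) ≤ (r:ℝ) := Nat.cast_nonneg r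
      linarith
    · exact hn (by omega)
  rw [tent, max_eq_left]
  have : (r : ℝ) + 1 ≤ (G.dist x0 z : ℝ) := by exact_mod_cast hrd
  linarith

lemma tent_support {x0 : V} {r : ℕ} {z : V} (h : tent G x0 r z ≠ 0) :
    (G.dist x0 z : ℝ) ≤ (r : ℝ) := by
  by_contra hc
  push_neg at hc
  exact h (tent_zero hc)

lemma tent_self {x0 : V} {r : ℕ} : tent G x0 r x0 = (r : ℝ) + 1 := by
  rw [tent, SimpleGraph.dist_self]
  simp
  positivity

lemma tent_lip (hconn : G.Connected) {x0 : V} {r : ℕ} {z w : V} (h : G.Adj z w) :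
    |tent G x0 r z - tent G x0 r w| ≤ 1 := by
  rw [tent, tent, max_comm 0 _, max_comm 0 _]
  refine le_trans (abs_max_sub_max_le_abs _ _ _) ?_
  have h1 : G.dist x0 z ≤ G.dist x0 w + 1 := by
    have ht := hconn.dist_triangle (u := x0) (v := w) (w := z)
    have : G.dist w z = 1 := SimpleGraph.dist_eq_one_iff_adj.mpr h.symm
    omega
  have h2 : G.dist x0 w ≤ G.dist x0 z + 1 := by
    have ht := hconn.dist_triangle (u := x0) (v := z) (w := w)
    have : G.dist z w = 1 := SimpleGraph.dist_eq_one_iff_adj.mpr h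
    omega
  rw [abs_le]
  constructor
  · have : (G.dist x0 z : ℝ) ≤ (G.dist x0 w : ℝ) + 1 := by exact_mod_cast h1
    linarith
  · have : (G.dist x0 w : ℝ) ≤ (G.dist x0 z : ℝ) + 1 := by exact_mod_cast h2
    linarith


lemma mem_nbrs {x y : V} : y ∈ nbrs G x ↔ G.Adj x y := by
  rw [nbrs]
  rw [@Finset.mem_filter _ _ (Classical.decPred _)]
  simp

lemma tent_quotient (d : ℕ) (c : ℝ) (lap : Module.End ℝ (V → ℝ))
    (hconn : G.Connected) (hd : 1 ≤ d) (hreg : ∀ x : V, (nbrs G x).card = d)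
    (hc : 2 ≤ c)
    (hdbl : ∀ (x : V) (R : ℝ), 0 < R →
      ((gball G x (2 * R)).card : ℝ) ≤ c * ((gball G x R).card : ℝ))
    (hform : ∀ f g : V → ℝ, ∑ x, f x * lap g x
      = (1 / (2 * (d:ℝ))) * ∑ x, ∑ y ∈ nbrs G x, (f x - f y) * (g x - g y))
    (hswap : ∀ F : V → V → ℝ, ∑ x, ∑ y ∈ nbrs G x, F x y = ∑ x, ∑ y ∈ nbrs G x, F y x)
    (x0 : V) (r : ℕ) (hr : 1 ≤ r) :
    ∑ z, tent G x0 r z * lap (tent G x0 r) z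
      ≤ (4 * c / (r : ℝ)^2) * ∑ z, tent G x0 r z * tent G x0 r z := by
  classical
  set f := tent G x0 r with hf
  have hr0 : (0:ℝ) < (r:ℝ) := by exact_mod_cast hr
  have hd0 : (0:ℝ) < (d:ℝ) := by exact_mod_cast hd
  set B : Finset V := gball G x0 (r : ℝ) with hB
  set B2 : Finset V := gball G x0 ((r : ℝ)/2) with hB2
  -- energy bound
  have hQ : ∑ z, f z * lap f z ≤ (B.card : ℝ) := by
    rw [hform f f]
    have hterm : ∀ z w : V, w ∈ nbrs G z →
        (f z - f w) * (f z - f w)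
          ≤ (if z ∈ B then (1:ℝ) else 0) + (if w ∈ B then (1:ℝ) else 0) := by
      intro z w hw
      have hadj : G.Adj z w := mem_nbrs.mp hw
      by_cases hz : z ∈ B
      · have h1 := tent_lip (x0 := x0) (r := r) hconn hadj
        have h2 : (f z - f w) * (f z - f w) ≤ 1 := by
          have := abs_le.mp h1
          nlinarith [this.1, this.2]
        simp only [if_pos hz]
        have : (0:ℝ) ≤ if w ∈ B then (1:ℝ) else 0 := by positivity
        linarith
      · by_cases hwB : w ∈ B
        · have h1 := tent_lip (x0 := x0) (r := r) hconn hadj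
          have h2 : (f z - f w) * (f z - f w) ≤ 1 := by
            have := abs_le.mp h1
            nlinarith [this.1, this.2]
          simp only [if_pos hwB, if_neg hz]
          linarith
        · have hfz : f z = 0 := by
            by_contra hne
            exact hz (mem_gball.mpr (tent_support hne))
          have hfw : f w = 0 := by
            by_contra hne
            exact hwB (mem_gball.mpr (tent_support hne))
          simp only [hfz, hfw]
          norm_num
          positivity
    have hsum : ∑ z, ∑ w ∈ nbrs G z, (f z - f w) * (f z - f w)
        ≤ ∑ z, ∑ w ∈ nbrs G z,
            ((if z ∈ B then (1:ℝ) else 0) + (if w ∈ B then (1:ℝ) else 0)) := by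
      exact Finset.sum_le_sum fun z _ => Finset.sum_le_sum fun w hw => hterm z w hw
    have hcount : ∑ z, ∑ w ∈ nbrs G z,
        ((if z ∈ B then (1:ℝ) else 0) + (if w ∈ B then (1:ℝ) else 0))
        = 2 * (d : ℝ) * (B.card : ℝ) := by
      have hchi : ∑ z, (if z ∈ B then (1:ℝ) else 0) = (B.card : ℝ) := by
        rw [Finset.sum_ite_mem, Finset.univ_inter, Finset.sum_const, nsmul_eq_mul, mul_one]
      have e1 : ∑ z, ∑ w ∈ nbrs G z, (if z ∈ B then (1:ℝ) else 0)
          = (d:ℝ) * (B.card : ℝ) := by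
        calc ∑ z, ∑ w ∈ nbrs G z, (if z ∈ B then (1:ℝ) else 0)
            = ∑ z, (d:ℝ) * (if z ∈ B then (1:ℝ) else 0) := by
              refine Finset.sum_congr rfl fun z _ => ?_
              rw [Finset.sum_const, hreg, nsmul_eq_mul]
          _ = (d:ℝ) * (B.card:ℝ) := by rw [← Finset.mul_sum, hchi]
      have e2 : ∑ z, ∑ w ∈ nbrs G z, (if w ∈ B then (1:ℝ) else 0)
          = (d:ℝ) * (B.card : ℝ) := by
        rw [hswap (fun z w => if w ∈ B then (1:ℝ) else 0)]
        exact e1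
      simp only [Finset.sum_add_distrib]
      rw [e1, e2]
      ring
    calc (1 / (2 * (d:ℝ))) * ∑ z, ∑ w ∈ nbrs G z, (f z - f w) * (f z - f w)
        ≤ (1 / (2 * (d:ℝ))) * (2 * (d : ℝ) * (B.card : ℝ)) := by
          apply mul_le_mul_of_nonneg_left _ (by positivity)
          rw [← hcount]
          exact hsum
      _ = (B.card : ℝ) := by rw [← mul_assoc, one_div, inv_mul_cancel₀ (by positivity), one_mul]
  -- doubling
  have hdb : (B.card : ℝ) ≤ c * (B2.card : ℝ) := by
    have := hdbl x0 ((r:ℝ)/2) (by positivity)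
    have heq : gball G x0 (2 * ((r:ℝ)/2)) = gball G x0 (r:ℝ) := by
      congr 1
      ring
    rw [heq] at this
    exact this
  -- mass bound
  have hN : (B2.card : ℝ) * ((r:ℝ)/2)^2 ≤ ∑ z, f z * f z := by
    have hsub : ∑ z ∈ B2, f z * f z ≤ ∑ z, f z * f z :=
      Finset.sum_le_sum_of_subset_of_nonneg (Finset.subset_univ B2)
        (fun z _ _ => mul_self_nonneg _)
    have hlow : (B2.card : ℝ) * ((r:ℝ)/2)^2 ≤ ∑ z ∈ B2, f z * f z := by
      have hzb : ∀ z ∈ B2, ((r:ℝ)/2)^2 ≤ f z * f z := by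
        intro z hz
        have hdist : (G.dist x0 z : ℝ) ≤ (r:ℝ)/2 := mem_gball.mp hz
        have hfz : (r:ℝ)/2 ≤ f z := by
          rw [hf, tent]
          have : (r:ℝ)/2 ≤ (r:ℝ) + 1 - (G.dist x0 z : ℝ) := by linarith
          exact le_trans this (le_max_right _ _)
        nlinarith [tent_nonneg (G := G) (x0 := x0) (r := r) (z := z)]
      calc (B2.card : ℝ) * ((r:ℝ)/2)^2 = ∑ _z ∈ B2, ((r:ℝ)/2)^2 := by
            rw [Finset.sum_const, nsmul_eq_mul]
        _ ≤ ∑ z ∈ B2, f z * f z := Finset.sum_le_sum hzb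
    linarith
  have hc0 : (0:ℝ) ≤ 4 * c / (r:ℝ)^2 := div_nonneg (by linarith) (by positivity)
  calc ∑ z, f z * lap f z ≤ (B.card : ℝ) := hQ
    _ ≤ c * (B2.card : ℝ) := hdb
    _ = (4 * c / (r:ℝ)^2) * ((B2.card:ℝ) * ((r:ℝ)/2)^2) := by
        rw [div_mul_eq_mul_div, eq_div_iff (by positivity)]
        ring
    _ ≤ (4 * c / (r:ℝ)^2) * ∑ z, f z * f z := mul_le_mul_of_nonneg_left hN hc0



set_option maxHeartbeats 1000000 in
/-- there are universal constants `A, C > 0` such that for every finite connected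
`d`-regular graph with doubling constant `c ≥ 2` and every integer `3 ≤ k ≤ |V|`, the `k`-th
eigenvalue of the discrete Laplacian satisfies `λ_k ≤ C · k^(A·c) / diam(X)²`. -/
theorem kth_eigenvalue_upper_bound_doubling :
    ∃ A C : ℝ, 0 < A ∧ 0 < C ∧
      ∀ (V : Type) [Fintype V] (G : SimpleGraph V) (d : ℕ) (c : ℝ),
        1 ≤ d →
        (∀ x : V, (nbrs G x).card = d) →
        G.Connected →
        2 ≤ c →
        -- `c` is the doubling constant of `G`
        (∀ (x : V) (R : ℝ), 0 < R →
            ((gball G x (2 * R)).card : ℝ) ≤ c * ((gball G x R).card : ℝ)) →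
        -- the discrete Laplacian
        ∀ lap : Module.End ℝ (V → ℝ),
          (∀ (f : V → ℝ) (x : V),
              lap f x = f x - (1 / (d : ℝ)) * ∑ y ∈ nbrs G x, f y) →
          -- `lam` enumerates the eigenvalues in nondecreasing order with multiplicity
          ∀ lam : Fin (Fintype.card V) → ℝ,
            Monotone lam →
            (∀ μ : ℝ, Nat.card {i : Fin (Fintype.card V) // lam i = μ}
                = Module.finrank ℝ (Module.End.eigenspace lap μ)) →
            ∀ k : ℕ, ∀ hk3 : 3 ≤ k, ∀ hkn : k ≤ Fintype.card V,
              lam ⟨k - 1, by omega⟩ ≤ C * (k : ℝ) ^ (A * c) / (gdiam G : ℝ) ^ 2 := by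
  classical
  refine ⟨3, 256, by norm_num, by norm_num, ?_⟩
  intro V _ G d c hd hreg hconn hc hdbl lap hlap lam hmono hmult k hk3 hkn
  have hswap := swap_nbrs G
  have hform := form_identity G d lap hd hreg hlap
  have hsym : ∀ f g : V → ℝ, ∑ x, f x * lap g x = ∑ x, lap f x * g x := by
    intro f g
    rw [hform f g]
    have h2 : ∑ x, lap f x * g x = ∑ x, g x * lap f x :=
      Finset.sum_congr rfl fun x _ => mul_comm _ _
    rw [h2, hform g f]
    exact congrArg _ (Finset.sum_congr rfl fun x _ =>
      Finset.sum_congr rfl fun y _ => by ring)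
  have hcard3 : 3 ≤ Fintype.card V := le_trans hk3 hkn
  have hNV : Nonempty V := by
    rw [← Fintype.card_pos_iff]; omega
  have hD1 : 1 ≤ gdiam G := by
    have hnt : Nontrivial V := Fintype.one_lt_card_iff_nontrivial.mp (by omega)
    obtain ⟨u, v, huv⟩ := hnt
    have h1 := hconn.pos_dist_of_ne huv
    have h2 := dist_le_gdiam (G := G) u v
    omega
  have hDR : (0:ℝ) < (gdiam G : ℝ) := by exact_mod_cast hD1
  have hD0 : (0:ℝ) < (gdiam G : ℝ)^2 := by positivity
  have hk1R : (1:ℝ) ≤ (k:ℝ) := by exact_mod_cast (by omega : 1 ≤ k)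
  have hk3R : (3:ℝ) ≤ (k:ℝ) := by exact_mod_cast hk3
  have hkR0 : (0:ℝ) < (k:ℝ) := by linarith
  have hX2 : (k:ℝ)^2 ≤ (k:ℝ)^((2:ℝ)*c) := by
    have h1 : (k:ℝ)^((2:ℕ):ℝ) ≤ (k:ℝ)^((2:ℝ)*c) :=
      Real.rpow_le_rpow_of_exponent_le hk1R (by push_cast; linarith)
    rwa [Real.rpow_natCast] at h1
  have hX2' : (k:ℝ)^2 ≤ (k:ℝ)^((3:ℝ)*c) := by
    have h1 : (k:ℝ)^((2:ℕ):ℝ) ≤ (k:ℝ)^((3:ℝ)*c) :=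
      Real.rpow_le_rpow_of_exponent_le hk1R (by push_cast; linarith)
    rwa [Real.rpow_natCast] at h1
  have hcX : c ≤ (k:ℝ)^c := by
    have hlog : 1 ≤ Real.log 3 := by
      rw [Real.le_log_iff_exp_le (by norm_num : (0:ℝ) < 3)]
      have := Real.exp_one_lt_d9
      linarith
    have h1 : c ≤ Real.log 3 * c := by nlinarith
    have h2 : Real.log 3 * c ≤ Real.exp (Real.log 3 * c) := by
      linarith [Real.add_one_le_exp (Real.log 3 * c)]
    have h3 : (3:ℝ)^c = Real.exp (Real.log 3 * c) := Real.rpow_def_of_pos (by norm_num) c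
    have h4 : (3:ℝ)^c ≤ (k:ℝ)^c := Real.rpow_le_rpow (by norm_num) hk3R (by linarith)
    linarith [h3 ▸ h2]
  have hXpos : (0:ℝ) < (k:ℝ)^((3:ℝ)*c) := Real.rpow_pos_of_pos hkR0 _
  have hck2 : c * (k:ℝ)^2 ≤ (k:ℝ)^((3:ℝ)*c) := by
    have e : (k:ℝ)^((3:ℝ)*c) = (k:ℝ)^c * (k:ℝ)^((2:ℝ)*c) := by
      rw [← Real.rpow_add hkR0]
      ring_nf
    rw [e]
    have h5 : (0:ℝ) ≤ (k:ℝ)^((2:ℝ)*c) := (Real.rpow_pos_of_pos hkR0 _).le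
    nlinarith [hcX, hX2, sq_nonneg (k:ℝ)]
  by_cases hcase : gdiam G < 8 * k
  · -- small diameter: trivial eigenvalue bound
    set μ := lam ⟨k - 1, by omega⟩ with hμ
    have hne : Nonempty {i : Fin (Fintype.card V) // lam i = μ} := ⟨⟨⟨k-1, by omega⟩, rfl⟩⟩
    have hpos : 0 < Nat.card {i : Fin (Fintype.card V) // lam i = μ} := Nat.card_pos
    rw [hmult μ] at hpos
    have hnb : Module.End.eigenspace lap μ ≠ ⊥ := by
      intro h
      rw [h, finrank_bot] at hpos
      omega
    obtain ⟨f0, hf0mem, hf0⟩ := (Submodule.ne_bot_iff _).mp hnb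
    have heig : lap f0 = μ • f0 := Module.End.mem_eigenspace_iff.mp hf0mem
    have hle2 : μ ≤ 2 := eig_le_two G d lap hform hswap hd hreg hf0 heig
    have hDle : (gdiam G : ℝ) ≤ 8 * (k:ℝ) := by exact_mod_cast Nat.le_of_lt hcase
    rw [le_div_iff₀ hD0]
    have hDsq : (gdiam G : ℝ)^2 ≤ 64 * (k:ℝ)^2 := by nlinarith
    nlinarith
  · push_neg at hcase
    set D := gdiam G with hDdef
    set s := D / k with hs
    set t := s / 2 with ht
    set r := t - 2 with hr
    have hk0 : 0 < k := by omega
    have hs8 : 8 ≤ s := (Nat.le_div_iff_mul_le hk0).mpr (by omega)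
    have ht4 : 4 ≤ t := (Nat.le_div_iff_mul_le (by norm_num : 0 < 2)).mpr (by omega)
    have hr2 : 2 ≤ r := by omega
    have htr : t = r + 2 := by omega
    have hst : s ≤ 2 * t + 1 := by
      have h1 := Nat.div_add_mod s 2
      have h2 := Nat.mod_lt s (by norm_num : 0 < 2)
      omega
    have h2t : 2 * t ≤ s := by
      have h1 := Nat.div_add_mod s 2
      omega
    have hsep_r : 2 * r + 2 ≤ s := by omega
    have hks : k * s ≤ 2 * (k * r) + 5 * k := by
      calc k * s ≤ k * (2 * t + 1) := Nat.mul_le_mul_left k hst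
        _ = 2 * (k * t) + k := by ring
        _ = 2 * (k * (r + 2)) + k := by rw [htr]
        _ = 2 * (k * r) + 5 * k := by ring
    have hmodD : D < k * s + k := by
      have h1 := Nat.div_add_mod D k
      rw [← hs] at h1
      have h2 := Nat.mod_lt D hk0
      omega
    have hksD : k * s ≤ D := by
      have := Nat.div_mul_le_self D k
      calc k * s = s * k := by ring
        _ ≤ D := this
    have hD8kr : D ≤ 8 * (k * r) := by
      have key : ∀ m q : ℕ, q ≤ 2*m + 5*k → D < q + k → 8*k ≤ D → D ≤ 8*m := by
        intro m q h1 h2 h3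
        omega
      exact key (k * r) (k * s) hks hmodD hcase
    -- construct separated points along a geodesic
    obtain ⟨u, v, huv⟩ := exists_gdiam (G := G)
    have hxe : ∀ i : Fin k, ∃ w, G.dist u w = (i:ℕ) * s ∧ G.dist w v = D - (i:ℕ) * s := by
      intro i
      have his : (i:ℕ) * s ≤ D := by
        calc (i:ℕ) * s ≤ k * s := Nat.mul_le_mul_right s (le_of_lt i.isLt)
          _ ≤ D := hksD
      exact gexists_between hconn ((i:ℕ)*s) u v (D - (i:ℕ)*s) (by omega)
    choose x hx1 hx2 using hxe
    have hsep : ∀ i j : Fin k, i ≠ j → s ≤ G.dist (x i) (x j) := by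
      have main : ∀ i j : Fin k, (i:ℕ) < (j:ℕ) → s ≤ G.dist (x i) (x j) := by
        intro i j hij
        have t1 : G.dist u v ≤ G.dist u (x i) + G.dist (x i) v :=
          hconn.dist_triangle
        have t2 : G.dist (x i) v ≤ G.dist (x i) (x j) + G.dist (x j) v :=
          hconn.dist_triangle
        have hjs : (j:ℕ) * s ≤ D := by
          calc (j:ℕ) * s ≤ k * s := Nat.mul_le_mul_right s (le_of_lt j.isLt)
            _ ≤ D := hksD
        have his1 : (i:ℕ) * s + s ≤ (j:ℕ) * s := by
          calc (i:ℕ) * s + s = ((i:ℕ) + 1) * s := by ring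
            _ ≤ (j:ℕ) * s := Nat.mul_le_mul_right s (by omega)
        have hchain : D ≤ (i:ℕ)*s + (G.dist (x i) (x j) + (D - (j:ℕ)*s)) := by
          have h3 := le_trans t1 (Nat.add_le_add_left t2 _)
          rw [huv, hx1 i, hx2 j] at h3
          omega
        have key2 : ∀ a b dd : ℕ, a + s ≤ b → b ≤ D → D ≤ a + (dd + (D - b)) → s ≤ dd := by
          intro a b dd h1 h2 h3
          omega
        exact key2 ((i:ℕ)*s) ((j:ℕ)*s) _ his1 hjs hchain
      intro i j hij
      rcases Nat.lt_or_ge (i:ℕ) (j:ℕ) with h | h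
      · exact main i j h
      · have h2 : (j:ℕ) < (i:ℕ) := by
          have := Fin.val_ne_of_ne hij
          omega
        rw [SimpleGraph.dist_comm]
        exact main j i h2
    set ff : Fin k → V → ℝ := fun i => tent G (x i) r with hff
    have hsupp : ∀ (i : Fin k) (z : V), ff i z ≠ 0 → G.dist (x i) z ≤ r := by
      intro i z h
      exact_mod_cast tent_support h
    have horthN : ∀ i j : Fin k, i ≠ j → ∑ z, ff i z * ff j z = 0 := by
      intro i j hij
      refine Finset.sum_eq_zero fun z _ => ?_
      by_contra hne
      obtain ⟨h1, h2⟩ := mul_ne_zero_iff.mp hne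
      have d1 := hsupp i z h1
      have d2 := hsupp j z h2
      have t1 : G.dist (x i) (x j) ≤ G.dist (x i) z + G.dist z (x j) := hconn.dist_triangle
      have t2 : G.dist z (x j) = G.dist (x j) z := SimpleGraph.dist_comm
      have t3 := hsep i j hij
      omega
    have tri4 : ∀ (i j : Fin k), i ≠ j → ∀ a b : V, G.dist (x i) a ≤ r →
        G.dist (x j) b ≤ r → G.dist a b ≤ 1 → False := by
      intro i j hij a b h1 h2 h3
      have t1 : G.dist (x i) (x j) ≤ G.dist (x i) a + G.dist a (x j) := hconn.dist_triangle
      have t2 : G.dist a (x j) ≤ G.dist a b + G.dist b (x j) := hconn.dist_triangle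
      have t3 : G.dist b (x j) = G.dist (x j) b := SimpleGraph.dist_comm
      have t4 := hsep i j hij
      omega
    have horthQ : ∀ i j : Fin k, i ≠ j → ∑ z, ff i z * lap (ff j) z = 0 := by
      intro i j hij
      rw [hform (ff i) (ff j)]
      rw [show ∑ z, ∑ w ∈ nbrs G z, (ff i z - ff i w) * (ff j z - ff j w) = 0 from ?_, mul_zero]
      refine Finset.sum_eq_zero fun z _ => Finset.sum_eq_zero fun w hw => ?_
      have hadj : G.Adj z w := mem_nbrs.mp hw
      have hdzw : G.dist z w ≤ 1 := le_of_eq (SimpleGraph.dist_eq_one_iff_adj.mpr hadj)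
      by_contra hne
      obtain ⟨h1, h2⟩ := mul_ne_zero_iff.mp hne
      have hA : G.dist (x i) z ≤ r ∨ G.dist (x i) w ≤ r := by
        by_contra hcon
        push_neg at hcon
        have e1 : ff i z = 0 := tent_zero (by exact_mod_cast hcon.1)
        have e2 : ff i w = 0 := tent_zero (by exact_mod_cast hcon.2)
        rw [e1, e2, sub_zero] at h1
        exact h1 rfl
      have hB : G.dist (x j) z ≤ r ∨ G.dist (x j) w ≤ r := by
        by_contra hcon
        push_neg at hcon
        have e1 : ff j z = 0 := tent_zero (by exact_mod_cast hcon.1)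
        have e2 : ff j w = 0 := tent_zero (by exact_mod_cast hcon.2)
        rw [e1, e2, sub_zero] at h2
        exact h2 rfl
      have hzz : G.dist z z ≤ 1 := by rw [SimpleGraph.dist_self]; omega
      have hww : G.dist w w ≤ 1 := by rw [SimpleGraph.dist_self]; omega
      have hwz : G.dist w z ≤ 1 := by rw [SimpleGraph.dist_comm]; exact hdzw
      rcases hA with hA | hA <;> rcases hB with hB | hB
      · exact tri4 i j hij z z hA hB hzz
      · exact tri4 i j hij z w hA hB hdzw
      · exact tri4 i j hij w z hA hB hwz
      · exact tri4 i j hij w w hA hB hww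
    have hind : LinearIndependent ℝ ff := by
      rw [Fintype.linearIndependent_iff]
      intro g hg i
      have hgi := congrFun hg (x i)
      rw [Finset.sum_apply] at hgi
      rw [Finset.sum_eq_single i] at hgi
      · have hself : ff i (x i) = (r:ℝ) + 1 := tent_self
        simp only [Pi.smul_apply, smul_eq_mul, hself, Pi.zero_apply] at hgi
        have : (r:ℝ) + 1 ≠ 0 := by positivity
        exact (mul_eq_zero.mp hgi).resolve_right this
      · intro j _ hji
        have hzero : ff j (x i) = 0 := by
          apply tent_zero
          have hd1 : s ≤ G.dist (x j) (x i) := hsep j i hji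
          have : r < G.dist (x j) (x i) := by omega
          exact_mod_cast this
        simp [hzero]
      · intro h
        exact absurd (Finset.mem_univ i) h
    have hq : ∀ i : Fin k, ∑ z, ff i z * lap (ff i) z
        ≤ (4 * c / (r:ℝ)^2) * ∑ z, ff i z * ff i z := by
      intro i
      exact tent_quotient d c lap hconn hd hreg hc hdbl hform hswap (x i) r (by omega)
    have hspec := spectral lap hsym lam hmono hmult k (by omega) hkn ff (4 * c / (r:ℝ)^2)
      horthN horthQ hind hq
    refine le_trans hspec ?_
    -- numeric conclusion
    have hrR : (0:ℝ) < (r:ℝ) := by exact_mod_cast (by omega : 0 < r)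
    have hDkr : (D:ℝ) ≤ 8 * ((k:ℝ) * (r:ℝ)) := by exact_mod_cast hD8kr
    rw [div_le_div_iff₀ (by positivity) hD0]
    have hDcast : (0:ℝ) ≤ (D:ℝ) := Nat.cast_nonneg D
    have h64 : ((gdiam G):ℝ)^2 ≤ 64 * ((k:ℝ)^2 * (r:ℝ)^2) := by nlinarith
    have step1 : 4*c*((gdiam G):ℝ)^2 ≤ 256*(c*(k:ℝ)^2)*(r:ℝ)^2 := by
      have hh := mul_le_mul_of_nonneg_left h64 (show (0:ℝ) ≤ 4*c by linarith)
      linarith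
    have step3 : 256*(c*(k:ℝ)^2)*(r:ℝ)^2 ≤ 256*((k:ℝ)^((3:ℝ)*c))*(r:ℝ)^2 := by
      have hh := mul_le_mul_of_nonneg_right hck2 (show (0:ℝ) ≤ (r:ℝ)^2 by positivity)
      linarith
    linarith
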